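/- arXiv:2102.07117 — 2 statements merged into one kernel-verified Lean document; each statement's English description precedes it below -/
import Mathlib

section
/- Let N ≥ 3, let Ω ⊂ ℝ^N be an open set, let p > 1 and σ < 1 be real numbers, and let u : Ω → ℝ be twice continuously differentiable and positive on Ω with −Δu(x) + σ·‖∇u(x)‖²/u(x) ≥ u(x)^p for every x ∈ Ω. Set c = (1−σ)^{(1−σ)/(p−1)} and v(x) = c·u(x)^{1−σ}. Then v is twice continuously differentiable and positive on Ω and satisfies −Δv(x) ≥ v(x)^{(p−σ)/(1−σ)} for every x ∈ Ω. -/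
open MeasureTheory Filter Set

open Topology

/-- The Euclidean Laplacian: the sum of the second partial derivatives. -/
noncomputable def lap {N : ℕ} (u : EuclideanSpace ℝ (Fin N) → ℝ)
    (x : EuclideanSpace ℝ (Fin N)) : ℝ :=
  ∑ i : Fin N,
    fderiv ℝ (fun y => fderiv ℝ u y (EuclideanSpace.single i 1)) x (EuclideanSpace.single i 1)

section aux

variable {N : ℕ}

local notation "E" => EuclideanSpace ℝ (Fin N)

lemma key_second_deriv (u : E → ℝ) (x : E) (hx2 : ContDiffAt ℝ 2 u x) (hpos : 0 < u x)
    (c r : ℝ) (i : Fin N) :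
    fderiv ℝ (fun y => fderiv ℝ (fun z => c * u z ^ r) y (EuclideanSpace.single i 1)) x
        (EuclideanSpace.single i 1)
      = c * r * ((r - 1) * u x ^ (r - 2) * (fderiv ℝ u x (EuclideanSpace.single i 1)) ^ 2
          + u x ^ (r - 1)
            * fderiv ℝ (fun y => fderiv ℝ u y (EuclideanSpace.single i 1)) x
                (EuclideanSpace.single i 1)) := by
  set ei : E := EuclideanSpace.single i 1 with hei
  have hevd : ∀ᶠ y in 𝓝 x, ContDiffAt ℝ 2 u y := hx2.eventually (by simp)
  have hevp : ∀ᶠ y in 𝓝 x, 0 < u y := hx2.continuousAt.eventually_mem (Ioi_mem_nhds hpos)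
  -- Step A: eventual formula for the first derivative in direction ei
  have hev : (fun y => fderiv ℝ (fun z => c * u z ^ r) y ei)
      =ᶠ[𝓝 x] fun y => (c * r) * (u y ^ (r - 1) * fderiv ℝ u y ei) := by
    filter_upwards [hevd, hevp] with y hy2 hyp
    have hdu : DifferentiableAt ℝ u y := hy2.differentiableAt (by norm_num)
    have h1 : HasFDerivAt (fun z => u z ^ r) ((r * u y ^ (r - 1)) • fderiv ℝ u y) y :=
      (Real.hasDerivAt_rpow_const (Or.inl hyp.ne')).comp_hasFDerivAt y hdu.hasFDerivAt
    have h2 : HasFDerivAt (fun z => c * u z ^ r) (c • ((r * u y ^ (r - 1)) • fderiv ℝ u y)) y :=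
      h1.const_mul c
    rw [h2.fderiv]
    simp
    ring
  rw [hev.fderiv_eq]
  have hdu : DifferentiableAt ℝ u x := hx2.differentiableAt (by norm_num)
  have hP : HasFDerivAt (fun y => u y ^ (r - 1)) (((r - 1) * u x ^ (r - 2)) • fderiv ℝ u x) x := by
    have := (Real.hasDerivAt_rpow_const (p := r - 1)
      (Or.inl hpos.ne')).comp_hasFDerivAt x hdu.hasFDerivAt
    rw [show r - 2 = r - 1 - 1 by ring]
    exact this
  have hfi : DifferentiableAt ℝ (fun y => fderiv ℝ u y ei) x := by
    have h1 : ContDiffAt ℝ 1 (fderiv ℝ u) x := hx2.fderiv_right (by norm_num)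
    exact (h1.differentiableAt one_ne_zero).clm_apply (differentiableAt_const _)
  have hprod : HasFDerivAt (fun y => u y ^ (r - 1) * fderiv ℝ u y ei)
      (u x ^ (r - 1) • fderiv ℝ (fun y => fderiv ℝ u y ei) x
        + fderiv ℝ u x ei • (((r - 1) * u x ^ (r - 2)) • fderiv ℝ u x)) x :=
    hP.mul hfi.hasFDerivAt
  have hfinal := hprod.const_mul (c * r)
  rw [hfinal.fderiv]
  simp
  ring

end aux

theorem change_of_unknown_supersolution
    {N : ℕ} (hN : 3 ≤ N) {Ω : Set (EuclideanSpace ℝ (Fin N))} (hΩ : IsOpen Ω)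
    {p σ : ℝ} (hp : 1 < p) (hσ : σ < 1)
    (u : EuclideanSpace ℝ (Fin N) → ℝ)
    (hu : ContDiffOn ℝ 2 u Ω) (hupos : ∀ x ∈ Ω, 0 < u x)
    (heq : ∀ x ∈ Ω, u x ^ p ≤ -lap u x + σ * ‖gradient u x‖ ^ 2 / u x) :
    ContDiffOn ℝ 2
      (fun x => (1 - σ) ^ ((1 - σ) / (p - 1)) * u x ^ (1 - σ)) Ω ∧
    (∀ x ∈ Ω, 0 < (1 - σ) ^ ((1 - σ) / (p - 1)) * u x ^ (1 - σ)) ∧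
    (∀ x ∈ Ω,
      ((1 - σ) ^ ((1 - σ) / (p - 1)) * u x ^ (1 - σ)) ^ ((p - σ) / (1 - σ))
        ≤ -lap (fun x => (1 - σ) ^ ((1 - σ) / (p - 1)) * u x ^ (1 - σ)) x) := by
  have h1σ : (0:ℝ) < 1 - σ := by linarith
  have hp1 : (0:ℝ) < p - 1 := by linarith
  set c : ℝ := (1 - σ) ^ ((1 - σ) / (p - 1)) with hc
  have hcpos : 0 < c := Real.rpow_pos_of_pos h1σ _
  refine ⟨?_, ?_, ?_⟩
  · intro x hx
    exact ((contDiffAt_const (c := c)).mul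
      ((hu.contDiffAt (hΩ.mem_nhds hx)).rpow_const_of_ne (hupos x hx).ne')).contDiffWithinAt
  · intro x hx
    have := hupos x hx
    positivity
  · intro x hx
    have hxpos := hupos x hx
    have hx2 : ContDiffAt ℝ 2 u x := hu.contDiffAt (hΩ.mem_nhds hx)
    -- gradient identity
    have hgrad : ∀ i : Fin N, fderiv ℝ u x (EuclideanSpace.single i 1) = gradient u x i := by
      intro i
      have h1 : (inner ℝ (gradient u x) (EuclideanSpace.single i (1:ℝ)) : ℝ)
          = fderiv ℝ u x (EuclideanSpace.single i 1) :=
        InnerProductSpace.toDual_symm_apply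
      rw [← h1, EuclideanSpace.inner_single_right]
      simp
    have hnorm : ‖gradient u x‖ ^ 2 = ∑ i : Fin N, (fderiv ℝ u x (EuclideanSpace.single i 1)) ^ 2 := by
      simp_rw [hgrad]
      rw [EuclideanSpace.norm_eq, Real.sq_sqrt (by positivity)]
      simp [sq_abs]
    -- Laplacian of v
    set r : ℝ := 1 - σ with hr
    have hlap : lap (fun x => c * u x ^ r) x
        = c * r * ((r - 1) * u x ^ (r - 2) * ‖gradient u x‖ ^ 2 + u x ^ (r - 1) * lap u x) := by
      unfold lap
      rw [hnorm]
      rw [Finset.sum_congr rfl fun i _ => key_second_deriv u x hx2 hxpos c r i]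
      simp only [mul_add, Finset.sum_add_distrib, Finset.mul_sum]
    -- rpow arithmetic on u x
    have hu1 : u x ^ (r - 2) = u x ^ (-σ) / u x := by
      have : r - 2 = -σ - 1 := by rw [hr]; ring
      rw [this, Real.rpow_sub hxpos, Real.rpow_one]
    have hu2 : u x ^ (r - 1) = u x ^ (-σ) := by
      congr 1
      rw [hr]; ring
    have hmain : c * r * u x ^ (-σ) * (u x ^ p)
        ≤ -lap (fun x => c * u x ^ r) x := by
      have hA := heq x hx
      have hfac : 0 < c * r * u x ^ (-σ) := by
        have : 0 < u x ^ (-σ) := Real.rpow_pos_of_pos hxpos _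
        have : 0 < r := h1σ
        positivity
      calc c * r * u x ^ (-σ) * (u x ^ p)
          ≤ c * r * u x ^ (-σ) * (-lap u x + σ * ‖gradient u x‖ ^ 2 / u x) :=
            mul_le_mul_of_nonneg_left hA hfac.le
        _ = -lap (fun x => c * u x ^ r) x := by
            rw [hlap, hu1, hu2, hr]
            field_simp
            ring
    have hLHS : (c * u x ^ r) ^ ((p - σ) / r) = c * r * u x ^ (-σ) * u x ^ p := by
      have hur : (0:ℝ) ≤ u x ^ r := (Real.rpow_pos_of_pos hxpos _).le
      rw [Real.mul_rpow hcpos.le hur, ← Real.rpow_mul hxpos.le]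
      have h1 : r * ((p - σ) / r) = p - σ := mul_div_cancel₀ _ h1σ.ne'
      rw [h1]
      have h2 : c ^ ((p - σ) / r) = c * r := by
        rw [hc, ← Real.rpow_mul h1σ.le]
        have h3 : (1 - σ) / (p - 1) * ((p - σ) / r) = (1 - σ) / (p - 1) + 1 := by
          rw [hr]; have h1σ' : (1 - σ) ≠ 0 := ne_of_gt (by linarith); field_simp; ring
        rw [h3, Real.rpow_add h1σ, Real.rpow_one]
      rw [h2]
      have h4 : u x ^ (-σ) * u x ^ p = u x ^ (p - σ) := by
        rw [← Real.rpow_add hxpos]; congr 1; ring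
      rw [← h4]; ring
    calc (c * u x ^ r) ^ ((p - σ) / r) = c * r * u x ^ (-σ) * u x ^ p := hLHS
      _ ≤ -lap (fun x => c * u x ^ r) x := hmain
end

section
/- Let s₀ ∈ (0,1) and let G : (0,s₀) → ℝ be Lebesgue integrable on (0,s₀) with G(r) ≥ 0 for almost every r ∈ (0,s₀). Then (1/δ)·∫₀^δ exp(∫_t^δ G(r) dr) dt → 1 as δ → 0⁺. -/
open MeasureTheory Filter Set

theorem average_exp_integral_tendsto_one
    {s₀ : ℝ} (hs₀ : s₀ ∈ Set.Ioo (0:ℝ) 1)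
    (G : ℝ → ℝ) (hG : IntegrableOn G (Set.Ioo 0 s₀))
    (hG_nonneg : ∀ᵐ r ∂volume.restrict (Set.Ioo 0 s₀), 0 ≤ G r) :
    Filter.Tendsto
      (fun δ : ℝ => (1 / δ) * ∫ t in (0:ℝ)..δ, Real.exp (∫ r in t..δ, G r))
      (nhdsWithin 0 (Set.Ioi 0)) (nhds 1) := by
  obtain ⟨hs₀0, hs₀1⟩ := hs₀
  -- nonnegativity of interval integrals of G
  have hnn : ∀ a b : ℝ, 0 ≤ a → b < s₀ → a ≤ b → 0 ≤ ∫ r in a..b, G r := by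
    intro a b ha hb hab
    rw [intervalIntegral.integral_of_le hab]
    refine MeasureTheory.integral_nonneg_of_ae ?_
    have hsub : Ioc a b ⊆ Ioo 0 s₀ :=
      fun x hx => ⟨lt_of_le_of_lt ha hx.1, lt_of_le_of_lt hx.2 hb⟩
    exact ae_restrict_of_ae_restrict_of_subset hsub hG_nonneg
  -- integrability on closed subintervals
  have hInt : ∀ b : ℝ, b < s₀ → IntegrableOn G (Icc 0 b) := by
    intro b hb
    rcases le_or_gt 0 b with h0b | h0b
    · rw [integrableOn_Icc_iff_integrableOn_Ioo]
      exact hG.mono_set (fun x hx => ⟨hx.1, hx.2.trans hb⟩)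
    · rw [Icc_eq_empty (not_le.mpr h0b)]
      simp [integrableOn_empty]
  have hII : ∀ a b : ℝ, 0 ≤ a → b < s₀ → a ≤ b → IntervalIntegrable G volume a b := by
    intro a b ha hb hab
    rw [intervalIntegrable_iff_integrableOn_Icc_of_le hab]
    exact (hInt b hb).mono_set (fun x hx => ⟨ha.trans hx.1, hx.2⟩)
  -- the upper bound function tends to 1
  have hprim : Tendsto (fun δ : ℝ => ∫ r in (0:ℝ)..δ, G r)
      (nhdsWithin 0 (Set.Ioi 0)) (nhds 0) := by
    have hcont : ContinuousOn (fun x => ∫ t in Ioc 0 x, G t) (Icc 0 (s₀/2)) :=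
      intervalIntegral.continuousOn_primitive (hInt (s₀/2) (by linarith))
    have h0 : ContinuousWithinAt (fun x => ∫ t in Ioc 0 x, G t) (Icc 0 (s₀/2)) 0 :=
      hcont 0 ⟨le_refl 0, by linarith⟩
    have h0' : Tendsto (fun x : ℝ => ∫ t in Ioc 0 x, G t)
        (nhdsWithin 0 (Icc 0 (s₀/2))) (nhds 0) := by
      simpa using h0.tendsto
    have hle : nhdsWithin (0:ℝ) (Set.Ioi 0) ≤ nhdsWithin 0 (Icc 0 (s₀/2)) := by
      rw [← nhdsWithin_Ioo_eq_nhdsGT (show (0:ℝ) < s₀/2 by linarith)]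
      exact nhdsWithin_mono _ Ioo_subset_Icc_self
    have := h0'.mono_left hle
    refine this.congr' ?_
    filter_upwards [self_mem_nhdsWithin] with δ hδ
    rw [intervalIntegral.integral_of_le (le_of_lt hδ)]
  have hupper : Tendsto (fun δ : ℝ => Real.exp (∫ r in (0:ℝ)..δ, G r))
      (nhdsWithin 0 (Set.Ioi 0)) (nhds 1) := by
    have := (Real.continuous_exp.tendsto 0).comp hprim
    simpa [Function.comp_def] using this
  -- squeeze
  refine tendsto_of_tendsto_of_tendsto_of_le_of_le' tendsto_const_nhds hupper ?_ ?_
  · filter_upwards [Ioo_mem_nhdsGT_of_mem ⟨le_refl 0, hs₀0⟩] with δ hδ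
    obtain ⟨hδ0, hδs⟩ := hδ
    -- integrand ≥ 1 so integral ≥ δ
    have hcontI : ContinuousOn (fun t => Real.exp (∫ r in t..δ, G r)) (uIcc 0 δ) := by
      apply Real.continuous_exp.comp_continuousOn
      apply intervalIntegral.continuousOn_primitive_interval_left
      rw [uIcc_of_le hδ0.le]
      exact (hInt δ hδs).mono_set (fun x hx => ⟨hx.1, hx.2⟩)
    have hexpInt : IntervalIntegrable (fun t => Real.exp (∫ r in t..δ, G r)) volume 0 δ :=
      hcontI.intervalIntegrable
    have hge : δ ≤ ∫ t in (0:ℝ)..δ, Real.exp (∫ r in t..δ, G r) := by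
      have := intervalIntegral.integral_mono_on hδ0.le
        (intervalIntegrable_const (c := (1:ℝ))) hexpInt
        (fun t ht => by
          have : (0:ℝ) ≤ ∫ r in t..δ, G r := hnn t δ ht.1 hδs ht.2
          simpa using Real.one_le_exp this)
      simpa using this
    rw [one_div, ← div_eq_inv_mul, le_div_iff₀ hδ0, one_mul]
    exact hge
  · filter_upwards [Ioo_mem_nhdsGT_of_mem ⟨le_refl 0, hs₀0⟩] with δ hδ
    obtain ⟨hδ0, hδs⟩ := hδ
    have hcontI : ContinuousOn (fun t => Real.exp (∫ r in t..δ, G r)) (uIcc 0 δ) := by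
      apply Real.continuous_exp.comp_continuousOn
      apply intervalIntegral.continuousOn_primitive_interval_left
      rw [uIcc_of_le hδ0.le]
      exact (hInt δ hδs).mono_set (fun x hx => ⟨hx.1, hx.2⟩)
    have hexpInt : IntervalIntegrable (fun t => Real.exp (∫ r in t..δ, G r)) volume 0 δ :=
      hcontI.intervalIntegrable
    have hle : (∫ t in (0:ℝ)..δ, Real.exp (∫ r in t..δ, G r))
        ≤ δ * Real.exp (∫ r in (0:ℝ)..δ, G r) := by
      have := intervalIntegral.integral_mono_on hδ0.le hexpInt
        (intervalIntegrable_const (c := Real.exp (∫ r in (0:ℝ)..δ, G r)))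
        (fun t ht => by
          apply Real.exp_le_exp.mpr
          have hsplit : (∫ r in (0:ℝ)..t, G r) + (∫ r in t..δ, G r)
              = ∫ r in (0:ℝ)..δ, G r :=
            intervalIntegral.integral_add_adjacent_intervals
              (hII 0 t le_rfl (ht.2.trans_lt hδs) ht.1)
              (hII t δ ht.1 hδs ht.2)
          have h1 : (0:ℝ) ≤ ∫ r in (0:ℝ)..t, G r := hnn 0 t le_rfl (ht.2.trans_lt hδs) ht.1
          linarith)
      simpa [mul_comm] using this
    calc (1/δ) * ∫ t in (0:ℝ)..δ, Real.exp (∫ r in t..δ, G r)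
        ≤ (1/δ) * (δ * Real.exp (∫ r in (0:ℝ)..δ, G r)) := by
          apply mul_le_mul_of_nonneg_left hle
          positivity
    _ = Real.exp (∫ r in (0:ℝ)..δ, G r) := by
          field_simp
end
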